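/- arXiv:0810.1059 — 2 statements merged into one kernel-verified Lean document; each statement's English description precedes it below -/
import Mathlib

section
/- For μ > 0, define φ_μ(z) = (1/Γ(μ+1))·(z^μ e^{−z} − z^{2μ} ∫_z^∞ u^{−μ} e^{−u} du) for z > 0. Then z maximizes φ_μ if and only if 1/(2z) = ∫_0^∞ (1+h)^{−μ} e^{−hz} dh, and this equation has a unique positive solution z_μ. -/
open MeasureTheory

section BesselAux
open Set Real Filter Topology

/-! ### Auxiliary definitions and lemmas -/

noncomputable def besselG (μ z : ℝ) : ℝ :=
  ∫ t in Set.Ioi (0:ℝ), (1 + t / z) ^ (-μ) * Real.exp (-t)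

lemma integral_Ioi_comp_add_right' (f : ℝ → ℝ) (a : ℝ) :
    ∫ x in Set.Ioi (0:ℝ), f (x + a) = ∫ x in Set.Ioi a, f x := by
  have h := (measurePreserving_add_right volume a).setIntegral_preimage_emb
    (measurableEmbedding_addRight a) f (Set.Ioi a)
  simpa using h

lemma measG (μ z : ℝ) : Measurable fun t : ℝ => (1 + t / z) ^ (-μ) * Real.exp (-t) :=
  ((measurable_const.add (measurable_id.div_const z)).pow measurable_const).mul
    (measurable_id.neg.exp)

lemma measf (μ : ℝ) : Measurable fun u : ℝ => u ^ (-μ) * Real.exp (-u) :=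
  (measurable_id.pow measurable_const).mul (measurable_id.neg.exp)

lemma expint : Integrable (fun t : ℝ => Real.exp (-t)) (volume.restrict (Set.Ioi 0)) := by
  have := exp_neg_integrableOn_Ioi 0 one_pos
  exact (by simpa [neg_one_mul] using this : IntegrableOn (fun t : ℝ => Real.exp (-t)) (Set.Ioi 0))

lemma integrableOn_f' {μ : ℝ} (hμ : 0 < μ) {a : ℝ} (ha : 0 < a) :
    IntegrableOn (fun u : ℝ => u ^ (-μ) * Real.exp (-u)) (Set.Ioi a) := by
  apply Integrable.mono' ((exp_neg_integrableOn_Ioi a one_pos).const_mul (a ^ (-μ)))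
  · exact (measf μ).aestronglyMeasurable
  · filter_upwards [ae_restrict_mem measurableSet_Ioi] with u hu
    have hu' : a ≤ u := (le_of_lt hu)
    have h1 : u ^ (-μ) ≤ a ^ (-μ) := Real.rpow_le_rpow_of_nonpos ha hu' (by linarith)
    have h2 : (0:ℝ) < u := ha.trans hu
    rw [Real.norm_eq_abs, abs_of_nonneg (by positivity)]
    have he : (-1:ℝ) * u = -u := by ring
    rw [he]
    exact mul_le_mul_of_nonneg_right h1 (Real.exp_nonneg _)

lemma F_eq {μ z : ℝ} (hz : 0 < z) :
    ∫ u in Set.Ioi z, u ^ (-μ) * Real.exp (-u)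
      = z * z ^ (-μ) * Real.exp (-z)
        * ∫ h in Set.Ioi (0:ℝ), (1 + h) ^ (-μ) * Real.exp (-h * z) := by
  set f : ℝ → ℝ := fun u => u ^ (-μ) * Real.exp (-u) with hf
  rw [← integral_Ioi_comp_add_right' f z]
  have h2 : ∫ x in Set.Ioi (0:ℝ), f (x + z) = z * ∫ x in Set.Ioi (0:ℝ), f (z * x + z) := by
    have h := integral_comp_mul_left_Ioi (fun h => f (h + z)) 0 hz
    simp only [smul_eq_mul, mul_zero] at h
    rw [h, ← mul_assoc, mul_inv_cancel₀ hz.ne', one_mul]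
  have h3 : ∀ x ∈ Set.Ioi (0:ℝ), f (z * x + z)
      = (z ^ (-μ) * Real.exp (-z)) * ((1 + x) ^ (-μ) * Real.exp (-x * z)) := by
    intro x hx
    have hx0 : (0:ℝ) < x := hx
    have h1x : (0:ℝ) ≤ 1 + x := by linarith
    have he : z * x + z = z * (1 + x) := by ring
    simp only [hf, he]
    rw [Real.mul_rpow hz.le h1x, show -(z * (1 + x)) = -z + -(x * z) by ring, Real.exp_add]
    ring
  rw [h2, setIntegral_congr_fun measurableSet_Ioi h3, integral_const_mul]
  ring

lemma G_eq {μ z : ℝ} (hz : 0 < z) :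
    besselG μ z = z * ∫ h in Set.Ioi (0:ℝ), (1 + h) ^ (-μ) * Real.exp (-h * z) := by
  unfold besselG
  have h := integral_comp_mul_left_Ioi (fun t => (1 + t / z) ^ (-μ) * Real.exp (-t)) 0 hz
  simp only [smul_eq_mul, mul_zero] at h
  have h3 : ∀ x ∈ Set.Ioi (0:ℝ), (1 + z * x / z) ^ (-μ) * Real.exp (-(z * x))
      = (1 + x) ^ (-μ) * Real.exp (-x * z) := by
    intro x hx
    rw [mul_div_cancel_left₀ _ hz.ne', show -(z * x) = -x * z by ring]
  rw [setIntegral_congr_fun measurableSet_Ioi h3] at h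
  rw [h, ← mul_assoc, mul_inv_cancel₀ hz.ne', one_mul]

lemma integrableOn_Gfun {μ z : ℝ} (hz : 0 < z) (hμ : 0 < μ) :
    IntegrableOn (fun t : ℝ => (1 + t / z) ^ (-μ) * Real.exp (-t)) (Set.Ioi 0) := by
  apply Integrable.mono' expint
  · exact (measG μ z).aestronglyMeasurable
  · filter_upwards [ae_restrict_mem measurableSet_Ioi] with t ht
    have ht0 : (0:ℝ) < t := ht
    have h1 : (1:ℝ) ≤ 1 + t / z := by
      have : 0 < t / z := div_pos ht0 hz
      linarith
    have h2 : (1 + t / z) ^ (-μ) ≤ 1 := Real.rpow_le_one_of_one_le_of_nonpos h1 (by linarith)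
    rw [Real.norm_eq_abs, abs_of_nonneg (by positivity)]
    nlinarith [Real.exp_pos (-t), Real.rpow_nonneg (by linarith : (0:ℝ) ≤ 1 + t/z) (-μ)]

lemma Gbound {μ z : ℝ} (hμ : 0 < μ) (hz : 0 < z) : ∀ᵐ t ∂(volume.restrict (Set.Ioi (0:ℝ))),
    ‖(1 + t / z) ^ (-μ) * Real.exp (-t)‖ ≤ Real.exp (-t) := by
  filter_upwards [ae_restrict_mem measurableSet_Ioi] with t ht
  have ht0 : (0:ℝ) < t := ht
  have h1' : (1:ℝ) ≤ 1 + t / z := by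
    have : 0 < t / z := div_pos ht0 hz
    linarith
  have h2' : (1 + t / z) ^ (-μ) ≤ 1 := Real.rpow_le_one_of_one_le_of_nonpos h1' (by linarith)
  rw [Real.norm_eq_abs, abs_of_nonneg (by positivity)]
  nlinarith [Real.exp_pos (-t), Real.rpow_nonneg (by linarith : (0:ℝ) ≤ 1 + t/z) (-μ)]

lemma besselG_strictMonoOn {μ : ℝ} (hμ : 0 < μ) : StrictMonoOn (besselG μ) (Set.Ioi 0) := by
  intro z₁ hz₁ z₂ hz₂ h12
  have hz₁' : (0:ℝ) < z₁ := hz₁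
  have hz₂' : (0:ℝ) < z₂ := hz₂
  have hpos : ∀ t ∈ Set.Ioi (0:ℝ), 0 <
      (1 + t / z₂) ^ (-μ) * Real.exp (-t) - (1 + t / z₁) ^ (-μ) * Real.exp (-t) := by
    intro t ht
    have ht0 : (0:ℝ) < t := ht
    have hlt : 1 + t / z₂ < 1 + t / z₁ := by
      have := div_lt_div_of_pos_left ht0 hz₁' h12
      linarith
    have hb : (0:ℝ) < 1 + t / z₂ := by positivity
    have := Real.rpow_lt_rpow_of_neg hb hlt (neg_lt_zero.mpr hμ)
    nlinarith [Real.exp_pos (-t)]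
  have key : 0 < ∫ t in Set.Ioi (0:ℝ),
      ((1 + t / z₂) ^ (-μ) * Real.exp (-t) - (1 + t / z₁) ^ (-μ) * Real.exp (-t)) := by
    rw [setIntegral_pos_iff_support_of_nonneg_ae]
    · refine lt_of_lt_of_le ?_ (measure_mono (fun t ht =>
        (⟨ne_of_gt (hpos t ht), ht⟩ : t ∈ Function.support _ ∩ Set.Ioi 0)))
      simp
    · filter_upwards [ae_restrict_mem measurableSet_Ioi] with t ht
      exact (hpos t ht).le
    · exact (integrableOn_Gfun hz₂' hμ).sub (integrableOn_Gfun hz₁' hμ)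
  rw [integral_sub (integrableOn_Gfun hz₂' hμ) (integrableOn_Gfun hz₁' hμ)] at key
  unfold besselG
  linarith

lemma besselG_continuousAt {μ z₀ : ℝ} (hμ : 0 < μ) (hz : 0 < z₀) :
    ContinuousAt (besselG μ) z₀ := by
  have h1 : ∀ᶠ z : ℝ in 𝓝 z₀, AEStronglyMeasurable
      (fun t : ℝ => (1 + t / z) ^ (-μ) * Real.exp (-t)) (volume.restrict (Set.Ioi 0)) := by
    filter_upwards with z
    exact (measG μ z).aestronglyMeasurable
  have h2 : ∀ᶠ z : ℝ in 𝓝 z₀, ∀ᵐ t ∂(volume.restrict (Set.Ioi (0:ℝ))),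
      ‖(1 + t / z) ^ (-μ) * Real.exp (-t)‖ ≤ Real.exp (-t) := by
    filter_upwards [Ioi_mem_nhds hz] with z hz'
    exact Gbound hμ hz'
  have h4 : ∀ᵐ t ∂(volume.restrict (Set.Ioi (0:ℝ))), Tendsto
      (fun z : ℝ => (1 + t / z) ^ (-μ) * Real.exp (-t)) (𝓝 z₀)
      (𝓝 ((1 + t / z₀) ^ (-μ) * Real.exp (-t))) := by
    filter_upwards [ae_restrict_mem measurableSet_Ioi] with t ht
    have ht0 : (0:ℝ) < t := ht
    have hb : (0:ℝ) < 1 + t / z₀ := by positivity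
    have hc1 : ContinuousAt (fun z : ℝ => 1 + t / z) z₀ :=
      continuousAt_const.add (continuousAt_const.div continuousAt_id hz.ne')
    have hc2 : ContinuousAt (fun x : ℝ => x ^ (-μ)) (1 + t / z₀) :=
      Real.continuousAt_rpow_const _ _ (Or.inl hb.ne')
    have hc3 : Tendsto (fun z : ℝ => (1 + t / z) ^ (-μ)) (𝓝 z₀) (𝓝 ((1 + t / z₀) ^ (-μ))) :=
      Filter.Tendsto.comp hc2 hc1
    exact hc3.mul tendsto_const_nhds
  exact tendsto_integral_filter_of_dominated_convergence _ h1 h2 expint h4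

lemma besselG_tendsto_zero {μ : ℝ} (hμ : 0 < μ) :
    Tendsto (fun n : ℕ => besselG μ (1 / (n + 1))) atTop (𝓝 0) := by
  have key : Tendsto (fun n : ℕ => besselG μ (1 / (n + 1))) atTop
      (𝓝 (∫ _ in Set.Ioi (0:ℝ), (0:ℝ))) := by
    apply tendsto_integral_filter_of_dominated_convergence (fun t => Real.exp (-t))
    · filter_upwards with n
      exact (measG μ _).aestronglyMeasurable
    · filter_upwards with n
      exact Gbound hμ (by positivity)
    · exact expint
    · filter_upwards [ae_restrict_mem measurableSet_Ioi] with t ht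
      have ht0 : (0:ℝ) < t := ht
      have hbase : Tendsto (fun n : ℕ => 1 + t / (1 / (n + 1 : ℝ))) atTop atTop := by
        apply tendsto_atTop_add_const_left
        have he : ∀ n : ℕ, t / (1 / (n + 1 : ℝ)) = t * (n + 1) := by
          intro n; field_simp
        simp only [he]
        have h2 : Tendsto (fun n : ℕ => ((n:ℝ) + 1)) atTop atTop :=
          tendsto_atTop_add_const_right _ _ tendsto_natCast_atTop_atTop
        exact h2.const_mul_atTop ht0
      have hr : Tendsto (fun x : ℝ => x ^ (-μ)) atTop (𝓝 0) := tendsto_rpow_neg_atTop hμ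
      have := (hr.comp hbase).mul (tendsto_const_nhds (x := Real.exp (-t)))
      simpa using this
  simpa using key

lemma besselG_tendsto_one {μ : ℝ} (hμ : 0 < μ) :
    Tendsto (fun n : ℕ => besselG μ (n + 1)) atTop (𝓝 1) := by
  have key : Tendsto (fun n : ℕ => besselG μ (n + 1)) atTop
      (𝓝 (∫ t in Set.Ioi (0:ℝ), Real.exp (-t))) := by
    apply tendsto_integral_filter_of_dominated_convergence (fun t => Real.exp (-t))
    · filter_upwards with n
      exact (measG μ _).aestronglyMeasurable
    · filter_upwards with n
      exact Gbound hμ (by positivity)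
    · exact expint
    · filter_upwards [ae_restrict_mem measurableSet_Ioi] with t ht
      have ht0 : (0:ℝ) < t := ht
      have hbase : Tendsto (fun n : ℕ => 1 + t / ((n:ℝ) + 1)) atTop (𝓝 1) := by
        have h2 : Tendsto (fun n : ℕ => t / ((n:ℝ) + 1)) atTop (𝓝 0) := by
          apply Tendsto.div_atTop tendsto_const_nhds
          exact tendsto_atTop_add_const_right _ _ tendsto_natCast_atTop_atTop
        simpa using (tendsto_const_nhds (x := (1:ℝ))).add h2
      have hr : ContinuousAt (fun x : ℝ => x ^ (-μ)) 1 :=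
        Real.continuousAt_rpow_const _ _ (Or.inl one_ne_zero)
      have h3 : Tendsto (fun n : ℕ => (1 + t / ((n:ℝ) + 1)) ^ (-μ)) atTop
          (𝓝 ((1:ℝ) ^ (-μ))) := Filter.Tendsto.comp hr hbase
      rw [Real.one_rpow] at h3
      have := h3.mul (tendsto_const_nhds (x := Real.exp (-t)))
      simpa using this
  rwa [integral_exp_neg_Ioi_zero] at key

lemma hasDerivAt_F {μ : ℝ} (hμ : 0 < μ) {z : ℝ} (hz : 0 < z) :
    HasDerivAt (fun x : ℝ => ∫ u in Set.Ioi x, u ^ (-μ) * Real.exp (-u))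
      (-(z ^ (-μ) * Real.exp (-z))) z := by
  set f : ℝ → ℝ := fun u => u ^ (-μ) * Real.exp (-u) with hf
  set a : ℝ := z / 2 with ha
  have ha0 : 0 < a := by positivity
  have haz : a < z := by rw [ha]; linarith
  have hsplit : ∀ x : ℝ, a < x →
      (∫ u in Set.Ioi x, f u) = (∫ u in Set.Ioi a, f u) - ∫ u in a..x, f u := by
    intro x hx
    rw [intervalIntegral.integral_of_le hx.le]
    have hu : Set.Ioc a x ∪ Set.Ioi x = Set.Ioi a := Set.Ioc_union_Ioi_eq_Ioi hx.le
    have hd : Disjoint (Set.Ioc a x) (Set.Ioi x) := Set.Ioc_disjoint_Ioi le_rfl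
    have h1 : IntegrableOn f (Set.Ioc a x) :=
      (integrableOn_f' hμ ha0).mono_set Set.Ioc_subset_Ioi_self
    have h2 : IntegrableOn f (Set.Ioi x) :=
      (integrableOn_f' hμ ha0).mono_set (Set.Ioi_subset_Ioi hx.le)
    have h3 := setIntegral_union hd measurableSet_Ioi h1 h2
    rw [hu] at h3
    rw [h3]; ring
  have hii : IntervalIntegrable f volume a z :=
    (intervalIntegrable_iff_integrableOn_Ioc_of_le haz.le).mpr
      ((integrableOn_f' hμ ha0).mono_set Set.Ioc_subset_Ioi_self)
  have hmeas : StronglyMeasurableAtFilter f (𝓝 z) :=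
    (measf μ).stronglyMeasurable.stronglyMeasurableAtFilter
  have hcont : ContinuousAt f z := by
    have h1 : ContinuousAt (fun u : ℝ => u ^ (-μ)) z :=
      Real.continuousAt_rpow_const z (-μ) (Or.inl hz.ne')
    exact h1.mul ((Real.continuous_exp.comp continuous_neg).continuousAt)
  have hftc : HasDerivAt (fun x => ∫ u in a..x, f u) (f z) z :=
    intervalIntegral.integral_hasDerivAt_right hii hmeas hcont
  have hD : HasDerivAt (fun x => (∫ u in Set.Ioi a, f u) - ∫ u in a..x, f u) (0 - f z) z :=
    (hasDerivAt_const z _).sub hftc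
  have hev : (fun x : ℝ => ∫ u in Set.Ioi x, f u)
      =ᶠ[𝓝 z] fun x => (∫ u in Set.Ioi a, f u) - ∫ u in a..x, f u := by
    filter_upwards [Ioi_mem_nhds haz] with x hx
    exact hsplit x hx
  have := hD.congr_of_eventuallyEq hev
  simpa using this

end BesselAux

/-- `φ_μ(z) = (1/Γ(μ+1)) (z^μ e^{−z} − z^{2μ} ∫_z^∞ u^{−μ} e^{−u} du)`. -/
noncomputable def phiBessel (μ z : ℝ) : ℝ :=
  (1 / Real.Gamma (μ + 1))
    * (z ^ μ * Real.exp (-z) - z ^ (2 * μ) * ∫ u in Set.Ioi z, u ^ (-μ) * Real.exp (-u))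

open Set Real Filter Topology in
lemma hasDerivAt_phi {μ : ℝ} (hμ : 0 < μ) {z : ℝ} (hz : 0 < z) :
    HasDerivAt (phiBessel μ)
      ((1 / Real.Gamma (μ + 1)) * μ * Real.exp (-z) * z ^ (μ - 1)
        * (1 - 2 * besselG μ z)) z := by
  set c : ℝ := 1 / Real.Gamma (μ + 1) with hc
  set I : ℝ := ∫ h in Set.Ioi (0:ℝ), (1 + h) ^ (-μ) * Real.exp (-h * z) with hI
  have h1 : HasDerivAt (fun x : ℝ => x ^ μ) (μ * z ^ (μ - 1)) z :=
    Real.hasDerivAt_rpow_const (Or.inl hz.ne')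
  have h2 : HasDerivAt (fun x : ℝ => Real.exp (-x)) (Real.exp (-z) * (-1)) z :=
    (hasDerivAt_neg z).exp
  have h3 : HasDerivAt (fun x : ℝ => x ^ (2 * μ)) ((2 * μ) * z ^ (2 * μ - 1)) z :=
    Real.hasDerivAt_rpow_const (Or.inl hz.ne')
  have hF := hasDerivAt_F hμ hz
  have hD := ((h1.mul h2).sub (h3.mul hF)).const_mul c
  have hDeq : (fun x : ℝ => c * ((fun x : ℝ => x ^ μ) x * (fun x : ℝ => Real.exp (-x)) x
      - (fun x : ℝ => x ^ (2*μ)) x * (fun x : ℝ => ∫ u in Set.Ioi x, u ^ (-μ) * Real.exp (-u)) x))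
      = phiBessel μ := by
    funext x
    simp only [phiBessel, hc]
  replace hD : HasDerivAt (phiBessel μ) _ z := hD
  have hFz := F_eq (μ := μ) hz
  rw [← hI] at hFz
  rw [hFz] at hD
  rw [G_eq hz, ← hI]
  set E : ℝ := Real.exp (-z) with hE
  have k1 : z ^ (2*μ) * z ^ (-μ) = z ^ μ := by
    rw [← Real.rpow_add hz]; ring_nf
  have k2 : z ^ (2*μ-1) * z = z ^ (2*μ) := by
    calc z ^ (2*μ-1) * z = z ^ (2*μ-1) * z ^ (1:ℝ) := by rw [Real.rpow_one]
      _ = z ^ (2*μ-1+1) := (Real.rpow_add hz _ _).symm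
      _ = z ^ (2*μ) := by ring_nf
  have k3 : z ^ (μ-1) * z = z ^ μ := by
    calc z ^ (μ-1) * z = z ^ (μ-1) * z ^ (1:ℝ) := by rw [Real.rpow_one]
      _ = z ^ (μ-1+1) := (Real.rpow_add hz _ _).symm
      _ = z ^ μ := by ring_nf
  have goal_eq : c * (μ * z ^ (μ - 1) * Real.exp (-z) + z ^ μ * (Real.exp (-z) * (-1))
        - (2 * μ * z ^ (2 * μ - 1) * (z * z ^ (-μ) * Real.exp (-z) * I)
          + z ^ (2 * μ) * (-(z ^ (-μ) * Real.exp (-z)))))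
      = c * μ * Real.exp (-z) * z ^ (μ - 1) * (1 - 2 * (z * I)) := by
    rw [← hE]
    linear_combination (c*E - 2*c*μ*E*I) * k1 + (-2*c*μ*E*I*z^(-μ)) * k2 + (2*c*μ*E*I) * k3
  rw [goal_eq] at hD
  exact hD

open Set Real Filter Topology in
lemma cond_iff {μ z : ℝ} (hz : 0 < z) :
    (1 / (2 * z) = ∫ h in Set.Ioi (0:ℝ), (1 + h) ^ (-μ) * Real.exp (-h * z))
      ↔ besselG μ z = 1/2 := by
  rw [G_eq hz]
  constructor
  · intro h
    rw [← h]
    field_simp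
  · intro h
    have hI : (∫ h in Set.Ioi (0:ℝ), (1 + h) ^ (-μ) * Real.exp (-h * z)) = 1 / (2 * z) := by
      field_simp at h ⊢
      linarith
    exact hI.symm

/-- For `μ > 0`, `z > 0` maximizes `φ_μ` on `(0,∞)` iff
`1/(2z) = ∫_0^∞ (1+h)^{−μ} e^{−hz} dh`, and this equation has a unique positive
solution `z_μ`. -/
theorem isMaxOn_phiBessel_iff_and_existsUnique (μ : ℝ) (hμ : 0 < μ) :
    (∀ z > (0 : ℝ),
        (IsMaxOn (phiBessel μ) (Set.Ioi 0) z ↔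
          1 / (2 * z) = ∫ h in Set.Ioi (0 : ℝ), (1 + h) ^ (-μ) * Real.exp (-h * z))) ∧
      ∃! z : ℝ, 0 < z ∧
        1 / (2 * z) = ∫ h in Set.Ioi (0 : ℝ), (1 + h) ^ (-μ) * Real.exp (-h * z) := by
  have hc : 0 < 1 / Real.Gamma (μ + 1) := by
    have := Real.Gamma_pos_of_pos (by linarith : (0:ℝ) < μ + 1)
    positivity
  constructor
  · intro z hz
    rw [cond_iff hz]
    constructor
    · intro hmax
      have hloc : IsLocalMax (phiBessel μ) z := hmax.isLocalMax (Ioi_mem_nhds hz)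
      have hder := hloc.hasDerivAt_eq_zero (hasDerivAt_phi hμ hz)
      have hzz : (0:ℝ) < z ^ (μ - 1) := Real.rpow_pos_of_pos hz _
      have hE : (0:ℝ) < Real.exp (-z) := Real.exp_pos _
      have h2 : (1 - 2 * besselG μ z) = 0 := by
        by_contra hne
        have : (1 / Real.Gamma (μ + 1)) * μ * Real.exp (-z) * z ^ (μ - 1)
            * (1 - 2 * besselG μ z) ≠ 0 := by
          apply mul_ne_zero _ hne
          positivity
        exact this hder
      linarith
    · intro heq
      -- besselG μ z = 1/2 : show IsMaxOn
      have hmono : StrictMonoOn (phiBessel μ) (Set.Ioc 0 z) := by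
        apply strictMonoOn_of_deriv_pos (convex_Ioc 0 z)
        · intro x hx
          exact (hasDerivAt_phi hμ hx.1).continuousAt.continuousWithinAt
        · intro x hx
          rw [interior_Ioc] at hx
          rw [(hasDerivAt_phi hμ hx.1).deriv]
          have hG : besselG μ x < 1/2 := by
            rw [← heq]
            exact besselG_strictMonoOn hμ hx.1 hz hx.2
          have hzz : (0:ℝ) < x ^ (μ - 1) := Real.rpow_pos_of_pos hx.1 _
          have hE : (0:ℝ) < Real.exp (-x) := Real.exp_pos _
          have : (0:ℝ) < 1 - 2 * besselG μ x := by linarith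
          positivity
      have hanti : StrictAntiOn (phiBessel μ) (Set.Ici z) := by
        apply strictAntiOn_of_deriv_neg (convex_Ici z)
        · intro x hx
          exact (hasDerivAt_phi hμ (lt_of_lt_of_le hz hx)).continuousAt.continuousWithinAt
        · intro x hx
          rw [interior_Ici] at hx
          have hx0 : (0:ℝ) < x := hz.trans hx
          rw [(hasDerivAt_phi hμ hx0).deriv]
          have hG : 1/2 < besselG μ x := by
            rw [← heq]
            exact besselG_strictMonoOn hμ hz hx0 hx
          have hzz : (0:ℝ) < x ^ (μ - 1) := Real.rpow_pos_of_pos hx0 _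
          have hE : (0:ℝ) < Real.exp (-x) := Real.exp_pos _
          have hneg : 1 - 2 * besselG μ x < 0 := by linarith
          have hpos : (0:ℝ) < (1 / Real.Gamma (μ + 1)) * μ * Real.exp (-x) * x ^ (μ - 1) := by
            positivity
          exact mul_neg_of_pos_of_neg hpos hneg
      intro x hx
      have hx0 : (0:ℝ) < x := hx
      rcases le_or_gt x z with hxz | hxz
      · rcases eq_or_lt_of_le hxz with h | h
        · simp [h]
        · exact le_of_lt (hmono ⟨hx0, hxz⟩ ⟨hz, le_refl z⟩ h)
      · exact le_of_lt (hanti (Set.self_mem_Ici) (le_of_lt hxz) hxz)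
  · -- existence and uniqueness
    have hsmall : ∃ a : ℝ, 0 < a ∧ besselG μ a < 1/2 := by
      have := (besselG_tendsto_zero hμ).eventually_lt_const (by norm_num : (0:ℝ) < 1/2)
      rcases this.exists with ⟨n, hn⟩
      exact ⟨1 / (n + 1), by positivity, hn⟩
    have hlarge : ∃ b : ℝ, 0 < b ∧ 1/2 < besselG μ b := by
      have := (besselG_tendsto_one hμ).eventually_const_lt (by norm_num : (1:ℝ)/2 < 1)
      rcases this.exists with ⟨n, hn⟩
      exact ⟨(n:ℝ) + 1, by positivity, hn⟩
    obtain ⟨a, ha0, haG⟩ := hsmall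
    obtain ⟨b, hb0, hbG⟩ := hlarge
    have hab : a < b := by
      by_contra hle
      push_neg at hle
      have : besselG μ b ≤ besselG μ a :=
        ((besselG_strictMonoOn hμ).monotoneOn) hb0 ha0 hle
      linarith
    have hcont : ContinuousOn (besselG μ) (Set.Icc a b) := by
      intro x hx
      exact (besselG_continuousAt hμ (lt_of_lt_of_le ha0 hx.1)).continuousWithinAt
    have hIVT := intermediate_value_Ioo hab.le hcont
    have hmem : (1/2 : ℝ) ∈ Set.Ioo (besselG μ a) (besselG μ b) := ⟨haG, hbG⟩
    obtain ⟨z, hzmem, hzG⟩ := hIVT hmem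
    have hz0 : 0 < z := ha0.trans hzmem.1
    refine ⟨z, ⟨hz0, (cond_iff hz0).mpr hzG⟩, ?_⟩
    intro y hy
    have hyG : besselG μ y = 1/2 := (cond_iff hy.1).mp hy.2
    exact (besselG_strictMonoOn hμ).injOn hy.1 hz0 (by rw [hyG, hzG])
end

section
/- Let R be a Bessel process of dimension d = 2(μ+1), μ > 0, started at 0, and a, t > 0. Then E[(1 ∧ (a/R_t)^{2μ})·(1 − 1 ∧ (a/R_t)^{2μ})] = φ_μ(a²/(2t)), where φ_μ(z) = (1/Γ(μ+1))·(z^μ e^{−z} − z^{2μ} ∫_z^∞ u^{−μ} e^{−u} du). -/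
open MeasureTheory ProbabilityTheory
open scoped ENNReal NNReal

lemma phiBessel_aux_integrable {μ z : ℝ} (hμ : 0 < μ) (hz : 0 < z) :
    IntegrableOn (fun u : ℝ => u ^ (-μ) * Real.exp (-u)) (Set.Ioi z) := by
  have hexp : IntegrableOn (fun u : ℝ => z ^ (-μ) * Real.exp (-u)) (Set.Ioi z) := by
    have h := (exp_neg_integrableOn_Ioi z (b := 1) one_pos).const_mul (z ^ (-μ))
    simp only [neg_mul, one_mul] at h
    exact h
  have hmeas : Measurable fun u : ℝ => u ^ (-μ) * Real.exp (-u) :=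
    (measurable_id.pow_const (-μ)).mul (measurable_id.neg.exp)
  refine Integrable.mono hexp hmeas.aestronglyMeasurable.restrict ?_
  filter_upwards [MeasureTheory.ae_restrict_mem measurableSet_Ioi] with u hu
  have hu0 : 0 < u := hz.trans hu
  have h1 : u ^ (-μ) ≤ z ^ (-μ) := by
    rw [Real.rpow_neg hz.le, Real.rpow_neg hu0.le]
    exact inv_anti₀ (Real.rpow_pos_of_pos hz μ)
      (Real.rpow_le_rpow hz.le hu.le hμ.le)
  have h2 : 0 ≤ u ^ (-μ) := Real.rpow_nonneg hu0.le _
  rw [Real.norm_eq_abs, Real.norm_eq_abs, abs_of_nonneg (by positivity),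
    abs_of_nonneg (by positivity)]
  exact mul_le_mul_of_nonneg_right h1 (Real.exp_nonneg _)

/-- Let `R` be a Bessel process of dimension `d = 2(μ+1)`, `μ > 0`, started at `0`
(so that by scaling `R_t` has the law of `√(2t γ_{μ+1})` with `γ_{μ+1} ~ Gamma(μ+1,1)`),
and `a, t > 0`. Then
`E[(1 ∧ (a/R_t)^{2μ}) (1 − 1 ∧ (a/R_t)^{2μ})] = φ_μ(a²/(2t))`. -/
theorem expectation_bessel_last_passage_eq_phiBessel
    {Ω : Type*} {m0 : MeasurableSpace Ω} (P : Measure Ω) [IsProbabilityMeasure P]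
    (μ : ℝ) (hμ : 0 < μ) (a t : ℝ) (ha : 0 < a) (ht : 0 < t)
    (R : ℝ → Ω → ℝ) (hmeas : Measurable (R t))
    (hlaw : Measure.map (R t) P
      = Measure.map (fun x : ℝ => Real.sqrt (2 * t * x)) (gammaMeasure (μ + 1) 1)) :
    ∫ ω, (min 1 ((a / R t ω) ^ (2 * μ))) * (1 - min 1 ((a / R t ω) ^ (2 * μ))) ∂P
      = phiBessel μ (a ^ 2 / (2 * t)) := by
  set z : ℝ := a ^ 2 / (2 * t) with hz_def
  have hz : 0 < z := by positivity
  have hΓ : 0 < Real.Gamma (μ + 1) := Real.Gamma_pos_of_pos (by linarith)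
  set F : ℝ → ℝ := fun y => min 1 ((a / y) ^ (2 * μ)) * (1 - min 1 ((a / y) ^ (2 * μ)))
    with hF_def
  have hFmeas : Measurable F := by
    have hm : Measurable fun y : ℝ => min 1 ((a / y) ^ (2 * μ)) :=
      measurable_const.min ((measurable_const.div measurable_id).pow_const _)
    exact hm.mul (measurable_const.sub hm)
  have hsqrt : Measurable fun x : ℝ => Real.sqrt (2 * t * x) :=
    (measurable_const.mul measurable_id).sqrt
  -- Step 1: transport to the gamma measure
  have h1 : ∫ ω, F (R t ω) ∂P
      = ∫ x, F (Real.sqrt (2 * t * x)) ∂(gammaMeasure (μ + 1) 1) := by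
    rw [← integral_map hmeas.aemeasurable hFmeas.aestronglyMeasurable, hlaw,
      integral_map hsqrt.aemeasurable hFmeas.aestronglyMeasurable]
  -- Step 2: gamma measure as density
  have h2 : ∫ x, F (Real.sqrt (2 * t * x)) ∂(gammaMeasure (μ + 1) 1)
      = ∫ x, gammaPDFReal (μ + 1) 1 x * F (Real.sqrt (2 * t * x)) := by
    rw [gammaMeasure]
    have : (gammaPDF (μ + 1) 1) = fun x => ((gammaPDFReal (μ + 1) 1 x).toNNReal : ℝ≥0∞) :=
      rfl
    rw [this, integral_withDensity_eq_integral_smul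
      (measurable_gammaPDFReal (μ + 1) 1).real_toNNReal]
    congr 1
    funext x
    rw [NNReal.smul_def, smul_eq_mul, Real.coe_toNNReal _
      (gammaPDFReal_nonneg (by linarith) one_pos x)]
  -- Step 3: pointwise identification of the integrand
  have h3 : (fun x : ℝ => gammaPDFReal (μ + 1) 1 x * F (Real.sqrt (2 * t * x)))
      = fun x => (1 / Real.Gamma (μ + 1)) *
        Set.indicator (Set.Ioi z) (fun x =>
          z ^ μ * Real.exp (-x) - z ^ (2 * μ) * (x ^ (-μ) * Real.exp (-x))) x := by
    funext x
    rcases le_or_gt x 0 with hx | hx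
    · have hpdf : gammaPDFReal (μ + 1) 1 x = 0 := by
        rcases lt_or_eq_of_le hx with hx' | hx'
        · simp [gammaPDFReal, not_le.mpr hx']
        · subst hx'
          have h0 : (0:ℝ) ^ (μ + 1 - 1) = 0 := by
            rw [show μ + 1 - 1 = μ by ring]; exact Real.zero_rpow hμ.ne'
          simp [gammaPDFReal, h0]
          exact Or.inr (Real.zero_rpow hμ.ne')
      rw [hpdf, zero_mul, Set.indicator_of_notMem (by simp; linarith), mul_zero]
    · -- x > 0
      have hsx : 0 < Real.sqrt (2 * t * x) := Real.sqrt_pos.mpr (by positivity)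
      have hkey : (a / Real.sqrt (2 * t * x)) ^ (2 * μ) = (z / x) ^ μ := by
        have hb : (0:ℝ) ≤ a / Real.sqrt (2 * t * x) := by positivity
        rw [Real.rpow_mul hb 2 μ, Real.rpow_two]
        congr 1
        rw [div_pow, Real.sq_sqrt (by positivity : (0:ℝ) ≤ 2 * t * x), hz_def]
        field_simp
      have hpdf : gammaPDFReal (μ + 1) 1 x
          = (1 / Real.Gamma (μ + 1)) * (x ^ μ * Real.exp (-x)) := by
        simp only [gammaPDFReal, if_pos hx.le, Real.one_rpow, one_mul,
          add_sub_cancel_right]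
        ring
      rcases le_or_gt x z with hxz | hxz
      · -- 0 < x ≤ z : min = 1, integrand = 0
        have h1le : (1:ℝ) ≤ (z / x) ^ μ := by
          have : (1:ℝ) ≤ z / x := (one_le_div hx).mpr hxz
          calc (1:ℝ) = 1 ^ μ := (Real.one_rpow μ).symm
            _ ≤ (z / x) ^ μ := Real.rpow_le_rpow zero_le_one this hμ.le
        have : F (Real.sqrt (2 * t * x)) = 0 := by
          simp only [hF_def, hkey, min_eq_left h1le]
          ring
        rw [this, mul_zero, Set.indicator_of_notMem (by simpa using hxz), mul_zero]
      · -- x > z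
        have hle1 : (z / x) ^ μ ≤ 1 :=
          Real.rpow_le_one (by positivity) (div_le_one_of_le₀ hxz.le hx.le) hμ.le
        have hFval : F (Real.sqrt (2 * t * x)) = (z / x) ^ μ * (1 - (z / x) ^ μ) := by
          simp only [hF_def, hkey, min_eq_right hle1]
        rw [hFval, hpdf, Set.indicator_of_mem (Set.mem_Ioi.mpr hxz)]
        have e1 : x ^ μ * (z / x) ^ μ = z ^ μ := by
          rw [← Real.mul_rpow hx.le (by positivity)]
          rw [mul_div_cancel₀ _ hx.ne']
        have e2 : (z / x) ^ μ * (z / x) ^ μ = z ^ (2 * μ) * x ^ (-μ) * x ^ (-μ) := by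
          rw [Real.div_rpow hz.le hx.le, Real.rpow_neg hx.le, show (2:ℝ) * μ = μ + μ by ring,
            Real.rpow_add hz]
          field_simp
        have e3 : x ^ μ * x ^ (-μ) = 1 := by
          rw [← Real.rpow_add hx]; simp
        linear_combination (1 / Real.Gamma (μ + 1) * Real.exp (-x)) * e1
          - (1 / Real.Gamma (μ + 1) * Real.exp (-x) * x ^ μ) * e2
          - (1 / Real.Gamma (μ + 1) * Real.exp (-x) * z ^ (2 * μ) * x ^ (-μ)) * e3
  -- Step 4: compute the integral
  have hexp : IntegrableOn (fun u : ℝ => Real.exp (-u)) (Set.Ioi z) := by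
    have := (exp_neg_integrableOn_Ioi z (b := 1) one_pos)
    simpa using this
  have hpow : IntegrableOn (fun u : ℝ => u ^ (-μ) * Real.exp (-u)) (Set.Ioi z) :=
    phiBessel_aux_integrable hμ hz
  calc ∫ ω, F (R t ω) ∂P
      = ∫ x, gammaPDFReal (μ + 1) 1 x * F (Real.sqrt (2 * t * x)) := by rw [h1, h2]
    _ = ∫ x, (1 / Real.Gamma (μ + 1)) *
          Set.indicator (Set.Ioi z) (fun x =>
            z ^ μ * Real.exp (-x) - z ^ (2 * μ) * (x ^ (-μ) * Real.exp (-x))) x := by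
        rw [h3]
    _ = (1 / Real.Gamma (μ + 1)) * ∫ x in Set.Ioi z,
          (z ^ μ * Real.exp (-x) - z ^ (2 * μ) * (x ^ (-μ) * Real.exp (-x))) := by
        rw [integral_const_mul, integral_indicator measurableSet_Ioi]
    _ = phiBessel μ z := by
        rw [integral_sub ((hexp.const_mul _)) ((hpow.const_mul _)),
          integral_const_mul, integral_const_mul, integral_exp_neg_Ioi, phiBessel]
end
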